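/- For positive integers l, define q_j^{(l)} for 1 ≤ j ≤ ⌈l/2⌉ by q_1^{(l)} = 1 and q_j^{(l)} = 1 − ∑_{κ=1}^{j−1} C(l+1−2κ, j−κ) q_κ^{(l)} for j ≥ 2. Then for all real u ≠ 0, ∑_{p=0}^{l−1} e^{(2p+1−l)u}/(e^u + e^{−u})^l = ∑_{j=1}^{⌈l/2⌉} q_j^{(l)}/(e^u + e^{−u})^{2j−1}. -/

import Mathlib

open Real Finset

/-- The integer coefficients `q_j^{(l)}`: `q_1^{(l)} = 1` and, for `j ≥ 2`,
`q_j^{(l)} = 1 - ∑_{κ=1}^{j-1} C(l+1-2κ, j-κ) q_κ^{(l)}`. -/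
def q (l : ℕ) : ℕ → ℤ := fun j =>
  1 - ∑ κ ∈ (Finset.Ico 1 j).attach,
      ((l + 1 - 2 * κ.1).choose (j - κ.1) : ℤ) * q l κ.1
decreasing_by exact (Finset.mem_Ico.mp κ.2).2

lemma key1 (l n : ℕ) (hn : 1 ≤ n) :
    ∑ j ∈ Finset.Icc 1 n, ((l + 1 - 2 * j).choose (n - j) : ℤ) * q l j = 1 := by
  have : Finset.Icc 1 n = Finset.Ico 1 (n+1) := by rw [Finset.Ico_add_one_right_eq_Icc]
  rw [this, Finset.sum_Ico_succ_top hn]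
  have hq : q l n = 1 - ∑ κ ∈ Finset.Ico 1 n,
      ((l + 1 - 2 * κ).choose (n - κ) : ℤ) * q l κ := by
    rw [q]; congr 1
    exact Finset.sum_attach _ fun κ => ((l + 1 - 2 * κ).choose (n - κ) : ℤ) * q l κ
  simp only [Nat.sub_self, Nat.choose_zero_right, Nat.cast_one, one_mul]
  rw [hq]; ring

lemma key2 (l n : ℕ) (h1 : 1 ≤ n) (h2 : n ≤ l) :
    ∑ j ∈ Finset.Icc 1 ((l+1)/2),
      (if j ≤ n ∧ n + j ≤ l + 1 then ((l + 1 - 2 * j).choose (n - j) : ℤ) * q l j else 0)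
      = 1 := by
  set n' := min n (l + 1 - n) with hn'
  have hn'1 : 1 ≤ n' := by omega
  have hn'm : n' ≤ (l+1)/2 := by omega
  have hcond : ∀ j ∈ Finset.Icc 1 ((l+1)/2), (j ≤ n ∧ n + j ≤ l + 1) ↔ j ∈ Finset.Icc 1 n' := by
    intro j hj
    simp only [Finset.mem_Icc] at hj ⊢
    omega
  rw [Finset.sum_congr rfl (fun j hj => if_congr (hcond j hj)
      (Eq.refl _) (Eq.refl _)), Finset.sum_ite_mem]
  have hinter : Finset.Icc 1 ((l+1)/2) ∩ Finset.Icc 1 n' = Finset.Icc 1 n' := by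
    apply Finset.inter_eq_right.mpr
    intro x hx
    simp only [Finset.mem_Icc] at hx ⊢
    omega
  rw [hinter]
  have hsymm : ∀ j ∈ Finset.Icc 1 n',
      ((l + 1 - 2 * j).choose (n - j) : ℤ) = ((l + 1 - 2 * j).choose (n' - j) : ℤ) := by
    intro j hj
    simp only [Finset.mem_Icc] at hj
    rcases le_or_gt n (l + 1 - n) with h | h
    · have : n' = n := by omega
      rw [this]
    · have h1' : n' = l + 1 - n := by omega
      have hle : n - j ≤ l + 1 - 2 * j := by omega
      have := Nat.choose_symm hle
      rw [show l + 1 - 2*j - (n - j) = n' - j by omega] at this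
      rw [← this]
  calc ∑ j ∈ Finset.Icc 1 n', ((l + 1 - 2 * j).choose (n - j) : ℤ) * q l j
      = ∑ j ∈ Finset.Icc 1 n', ((l + 1 - 2 * j).choose (n' - j) : ℤ) * q l j := by
        exact Finset.sum_congr rfl fun j hj => by rw [hsymm j hj]
    _ = 1 := key1 l n' hn'1

lemma key3 (l : ℕ) (hl : 0 < l) (u : ℝ) (Q : ℕ → ℤ)
    (hQ : ∀ n, 1 ≤ n → n ≤ l → ∑ j ∈ Finset.Icc 1 ((l+1)/2),
      (if j ≤ n ∧ n + j ≤ l + 1 then ((l + 1 - 2 * j).choose (n - j) : ℤ) * Q j else 0) = 1) :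
    ∑ p ∈ Finset.range l, Real.exp ((2 * (p : ℝ) + 1 - l) * u) =
    ∑ j ∈ Finset.Icc 1 ((l+1)/2), (Q j : ℝ) * (Real.exp u + Real.exp (-u)) ^ (l + 1 - 2 * j) := by
  set E : ℕ → ℝ := fun n => Real.exp ((2 * (n : ℝ) - (l + 1)) * u) with hE
  have step1 : ∑ p ∈ Finset.range l, Real.exp ((2 * (p : ℝ) + 1 - l) * u)
      = ∑ n ∈ Finset.Icc 1 l, E n := by
    rw [show Finset.Icc 1 l = Finset.Ico 1 (l+1) from (Finset.Ico_add_one_right_eq_Icc 1 l).symm,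
      Finset.sum_Ico_eq_sum_range]
    apply Finset.sum_congr (by congr 1)
    intro p _
    simp only [hE]
    congr 1
    push_cast
    ring
  rw [step1]
  have step2 : ∀ j ∈ Finset.Icc 1 ((l+1)/2),
      (Q j : ℝ) * (Real.exp u + Real.exp (-u)) ^ (l + 1 - 2 * j)
      = ∑ n ∈ Finset.Icc 1 l,
          (if j ≤ n ∧ n + j ≤ l + 1 then ((l + 1 - 2 * j).choose (n - j) : ℝ) * (Q j : ℝ) else 0) * E n := by
    intro j hj
    simp only [Finset.mem_Icc] at hj
    obtain ⟨hj1, hj2⟩ := hj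
    have h2j : 2 * j ≤ l + 1 := by omega
    rw [add_pow, Finset.mul_sum]
    have expand : ∀ i ∈ Finset.range (l + 1 - 2 * j + 1),
        (Q j : ℝ) * (Real.exp u ^ i * Real.exp (-u) ^ (l + 1 - 2 * j - i) * ((l + 1 - 2*j).choose i : ℝ))
        = ((l + 1 - 2 * j).choose i : ℝ) * (Q j : ℝ) * E (j + i) := by
      intro i hi
      simp only [Finset.mem_range] at hi
      have hiN : i ≤ l + 1 - 2 * j := by omega
      rw [← Real.exp_nat_mul, ← Real.exp_nat_mul, ← Real.exp_add]
      simp only [hE]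
      rw [show (i : ℝ) * u + ((l + 1 - 2*j - i : ℕ) : ℝ) * (-u) = (2 * ((j + i : ℕ) : ℝ) - (l + 1)) * u by
        push_cast [Nat.cast_sub hiN, Nat.cast_sub h2j]; ring]
      ring
    rw [Finset.sum_congr rfl expand]
    have step2b : ∑ n ∈ Finset.Icc j (l + 1 - j),
        ((l + 1 - 2 * j).choose (n - j) : ℝ) * (Q j : ℝ) * E n
        = ∑ i ∈ Finset.range (l + 1 - 2 * j + 1),
            ((l + 1 - 2 * j).choose i : ℝ) * (Q j : ℝ) * E (j + i) := by
      rw [show Finset.Icc j (l+1-j) = Finset.Ico j (l+1-j+1) from (Finset.Ico_add_one_right_eq_Icc _ _).symm,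
        Finset.sum_Ico_eq_sum_range]
      apply Finset.sum_congr (by congr 1; omega)
      intro i _
      rw [Nat.add_sub_cancel_left]
    rw [← step2b]
    have hsub : Finset.Icc 1 l ∩ Finset.Icc j (l + 1 - j) = Finset.Icc j (l + 1 - j) := by
      apply Finset.inter_eq_right.mpr
      intro x hx
      simp only [Finset.mem_Icc] at hx ⊢
      omega
    rw [← hsub, ← Finset.sum_ite_mem]
    apply Finset.sum_congr rfl
    intro n hn
    simp only [Finset.mem_Icc] at hn
    rw [ite_mul, zero_mul]
    congr 1
    · simp only [Finset.mem_Icc, eq_iff_iff]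
      omega
  rw [Finset.sum_congr rfl step2, Finset.sum_comm]
  apply Finset.sum_congr rfl
  intro n hn
  simp only [Finset.mem_Icc] at hn
  rw [← Finset.sum_mul]
  have := hQ n hn.1 hn.2
  have hcast : (∑ j ∈ Finset.Icc 1 ((l+1)/2),
      (if j ≤ n ∧ n + j ≤ l + 1 then ((l + 1 - 2 * j).choose (n - j) : ℝ) * (Q j : ℝ) else 0)) = 1 := by
    have := congrArg (fun z : ℤ => (z : ℝ)) this
    push_cast at this
    convert this using 2
  rw [hcast, one_mul]

lemma ceil_eq' (l : ℕ) : Nat.ceil ((l : ℚ) / 2) = (l + 1) / 2 := by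
  rcases Nat.even_or_odd l with ⟨k, hk⟩ | ⟨k, hk⟩ <;> subst hk
  · rw [show ((k + k : ℕ) : ℚ) / 2 = ((k:ℕ) : ℚ) by push_cast; ring, Nat.ceil_natCast]
    omega
  · rw [show (2 * k + 1 + 1) / 2 = k + 1 by omega,
      Nat.ceil_eq_iff (Nat.succ_ne_zero k)]
    push_cast
    constructor <;> [nlinarith; nlinarith]

theorem stmt_17 (l : ℕ) (hl : 0 < l) (u : ℝ) (hu : u ≠ 0) :
    ∑ p ∈ Finset.range l,
        Real.exp ((2 * (p : ℝ) + 1 - l) * u) / (Real.exp u + Real.exp (-u)) ^ l =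
      ∑ j ∈ Finset.Icc 1 (Nat.ceil ((l : ℚ) / 2)),
        (q l j : ℝ) / (Real.exp u + Real.exp (-u)) ^ (2 * j - 1) := by
  have hc : 0 < Real.exp u + Real.exp (-u) := by positivity
  set c := Real.exp u + Real.exp (-u) with hcdef
  rw [ceil_eq', ← Finset.sum_div]
  have hrhs : ∀ j ∈ Finset.Icc 1 ((l+1)/2),
      (q l j : ℝ) / c ^ (2 * j - 1) = (q l j : ℝ) * c ^ (l + 1 - 2 * j) / c ^ l := by
    intro j hj
    simp only [Finset.mem_Icc] at hj
    rw [div_eq_div_iff (by positivity) (by positivity), mul_assoc, ← pow_add]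
    congr 2
    omega
  rw [Finset.sum_congr rfl hrhs, ← Finset.sum_div]
  congr 1
  exact key3 l hl u (q l) (fun n h1 h2 => key2 l n h1 h2)
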